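/- Let G be a finite group and H ≤ G. For each double coset K = HgH define e_K = (1/|H|)·Σ_{x∈K} x ∈ ℚG. Then the product of any two such elements e_K·e_L is a ℤ-linear combination of the elements e_M (M ranging over double cosets); hence the ℤ-span of {e_K : K ∈ H\G/H} is a subring of ℚG finitely generated as a ℤ-module, and every e_K is integral over ℤ. -/

import Mathlib

open Finset DoubleCoset MonoidAlgebra
open scoped Pointwise

section StmtFifteenHelpers

variable {G : Type} [Group G]

lemma stmt15_card_dvd_aux [Finite G] (H : Subgroup G) :
    ∀ S : Finset G, (∀ x ∈ S, ∀ h ∈ H, x * h ∈ S) → Nat.card H ∣ S.card := by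
  classical
  haveI := Fintype.ofFinite G
  intro S
  induction S using Finset.strongInduction with
  | _ S ih =>
    intro hS
    rcases S.eq_empty_or_nonempty with rfl | ⟨x, hx⟩
    · simp
    · set C : Finset G := (H : Set G).toFinset.image (fun h => x * h) with hC
      have hCsub : C ⊆ S := by
        intro y hy
        simp only [hC, Finset.mem_image, Set.mem_toFinset, SetLike.mem_coe] at hy
        obtain ⟨h, hh, rfl⟩ := hy
        exact hS x hx h hh
      have hCcard : C.card = Nat.card H := by
        rw [Finset.card_image_of_injective _ (mul_right_injective x)]
        simp [Set.toFinset_card, Nat.card_eq_fintype_card]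
      have hCx : x ∈ C := by
        simp only [hC, Finset.mem_image, Set.mem_toFinset, SetLike.mem_coe]
        exact ⟨1, H.one_mem, mul_one x⟩
      have hssub : S \ C ⊂ S := by
        apply Finset.sdiff_ssubset hCsub ⟨x, hCx⟩
      have hclosed : ∀ y ∈ S \ C, ∀ h ∈ H, y * h ∈ S \ C := by
        intro y hy h hh
        rw [Finset.mem_sdiff] at hy ⊢
        refine ⟨hS y hy.1 h hh, fun hc => hy.2 ?_⟩
        simp only [hC, Finset.mem_image, Set.mem_toFinset, SetLike.mem_coe] at hc ⊢
        obtain ⟨h', hh', he⟩ := hc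
        refine ⟨h' * h⁻¹, H.mul_mem hh' (H.inv_mem hh), ?_⟩
        rw [← mul_assoc, he, mul_assoc, mul_inv_cancel, mul_one]
      have := ih _ hssub hclosed
      have hcard : S.card = (S \ C).card + C.card := by
        have := Finset.card_le_card hCsub
        rw [Finset.card_sdiff_of_subset hCsub]
        omega
      rw [hcard, hCcard]
      exact Nat.dvd_add this dvd_rfl

lemma stmt15_mul_mem_doset_left {H : Subgroup G} {g x a : G} (ha : a ∈ H)
    (hx : x ∈ doubleCoset g (H : Set G) (H : Set G)) : a * x ∈ doubleCoset g (H : Set G) (H : Set G) := by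
  obtain ⟨h, hh, k, hk, rfl⟩ := mem_doubleCoset.1 hx
  exact mem_doubleCoset.2 ⟨a * h, H.mul_mem ha hh, k, hk, by group⟩

lemma stmt15_mul_mem_doset_right {H : Subgroup G} {g x b : G} (hb : b ∈ H)
    (hx : x ∈ doubleCoset g (H : Set G) (H : Set G)) : x * b ∈ doubleCoset g (H : Set G) (H : Set G) := by
  obtain ⟨h, hh, k, hk, rfl⟩ := mem_doubleCoset.1 hx
  exact mem_doubleCoset.2 ⟨h, hh, k * b, H.mul_mem hk hb, by group⟩

lemma stmt15_indicator_apply [Finite G] (S : Set G) (z : G) [Decidable (z ∈ S)] :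
    (∑ᶠ x ∈ S, MonoidAlgebra.single x (1 : ℚ)).coeff z = if z ∈ S then 1 else 0 := by
  classical
  haveI := Fintype.ofFinite G
  have hS := finsum_mem_coe_finset (fun x => (MonoidAlgebra.single x (1:ℚ) : MonoidAlgebra ℚ G)) S.toFinset
  rw [Set.coe_toFinset] at hS
  rw [hS, MonoidAlgebra.coeff_sum, Finsupp.finset_sum_apply]
  simp_rw [MonoidAlgebra.single_apply]
  rw [Finset.sum_ite_eq' S.toFinset z (fun _ => (1:ℚ))]
  simp [Set.mem_toFinset]

/-- The number of ways to write `z = x * y` with `x ∈ Hg₁H` and `y ∈ Hg₂H`. -/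
noncomputable def Scount (H : Subgroup G) (g₁ g₂ : G) (z : G) : ℕ :=
  Nat.card {x : G // x ∈ doubleCoset g₁ (H : Set G) (H : Set G) ∧
    x⁻¹ * z ∈ doubleCoset g₂ (H : Set G) (H : Set G)}

lemma stmt15_mul_indicator_apply [Finite G] (K L : Set G) (z : G) :
    ((∑ᶠ x ∈ K, MonoidAlgebra.single x (1:ℚ)) * (∑ᶠ x ∈ L, MonoidAlgebra.single x (1:ℚ))).coeff z
      = Nat.card {x : G // x ∈ K ∧ x⁻¹ * z ∈ L} := by
  classical
  haveI := Fintype.ofFinite G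
  rw [← Set.coe_toFinset K, ← Set.coe_toFinset L, finsum_mem_coe_finset, finsum_mem_coe_finset,
    Finset.sum_mul_sum]
  simp_rw [MonoidAlgebra.single_mul_single, one_mul]
  rw [MonoidAlgebra.coeff_sum, Finsupp.finset_sum_apply]
  have h0 : ∀ i : G, (∑ x ∈ L.toFinset, MonoidAlgebra.single (i * x) (1:ℚ)).coeff z
      = ∑ x ∈ L.toFinset, (MonoidAlgebra.single (i * x) (1:ℚ)).coeff z :=
    fun i => by rw [MonoidAlgebra.coeff_sum, Finsupp.finset_sum_apply]
  rw [Finset.sum_congr rfl fun i _ => h0 i]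
  simp_rw [MonoidAlgebra.single_apply]
  have h1 : ∀ x : G, (∑ y ∈ L.toFinset, if x * y = z then (1:ℚ) else 0)
      = if x⁻¹ * z ∈ L.toFinset then 1 else 0 := by
    intro x
    rw [← Finset.sum_ite_eq' L.toFinset (x⁻¹ * z) (fun _ => (1:ℚ))]
    apply Finset.sum_congr rfl
    intro y _
    congr 1
    simp [eq_inv_mul_iff_mul_eq, eq_comm]
  simp_rw [h1]
  rw [Finset.sum_boole, Nat.card_eq_fintype_card, Fintype.card_subtype]
  norm_num
  congr 1
  ext x
  simp [Set.mem_toFinset]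

lemma stmt15_Scount_invariant (H : Subgroup G) (g₁ g₂ : G) {a b z : G}
    (ha : a ∈ H) (hb : b ∈ H) :
    Scount H g₁ g₂ (a * z * b) = Scount H g₁ g₂ z := by
  apply Nat.card_congr
  refine ⟨fun x => ⟨a⁻¹ * x.1, ?_, ?_⟩, fun x => ⟨a * x.1, ?_, ?_⟩, ?_, ?_⟩
  · exact stmt15_mul_mem_doset_left (H.inv_mem ha) x.2.1
  · have := stmt15_mul_mem_doset_right (H.inv_mem hb) x.2.2
    have e : x.1⁻¹ * (a * z * b) * b⁻¹ = (a⁻¹ * x.1)⁻¹ * z := by group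
    rwa [e] at this
  · exact stmt15_mul_mem_doset_left ha x.2.1
  · have := stmt15_mul_mem_doset_right hb x.2.2
    have e : x.1⁻¹ * z * b = (a * x.1)⁻¹ * (a * z * b) := by group
    rwa [e] at this
  · intro x; ext; simp
  · intro x; ext; simp

lemma stmt15_Scount_dvd [Finite G] (H : Subgroup G) (g₁ g₂ : G) (z : G) :
    Nat.card H ∣ Scount H g₁ g₂ z := by
  classical
  haveI := Fintype.ofFinite G
  have : Scount H g₁ g₂ z = (Finset.univ.filter fun x : G =>
      x ∈ doubleCoset g₁ (H : Set G) (H : Set G) ∧ x⁻¹ * z ∈ doubleCoset g₂ (H : Set G) (H : Set G)).card := by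
    rw [Scount, Nat.card_eq_fintype_card, Fintype.card_subtype]
  rw [this]
  apply stmt15_card_dvd_aux
  intro x hx h hh
  rw [Finset.mem_filter] at hx ⊢
  refine ⟨Finset.mem_univ _, stmt15_mul_mem_doset_right hh hx.2.1, ?_⟩
  have := stmt15_mul_mem_doset_left (H.inv_mem hh) hx.2.2
  have e : h⁻¹ * (x⁻¹ * z) = (x * h)⁻¹ * z := by group
  rwa [e] at this

end StmtFifteenHelpers

/-- The double coset sum `e_K = (1/|H|)·Σ_{x∈HgH} x ∈ ℚG`. -/
noncomputable def eDoset {G : Type} [Group G] [Finite G] (H : Subgroup G) (g : G) :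
    MonoidAlgebra ℚ G :=
  (Nat.card H : ℚ)⁻¹ •
    ∑ᶠ x ∈ DoubleCoset.doubleCoset g (H : Set G) (H : Set G), MonoidAlgebra.single x (1 : ℚ)

section StmtFifteenMain

variable {G : Type} [Group G] [Finite G]

/-- A set of representatives for the double cosets. -/
noncomputable def dosetReps (H : Subgroup G) : Finset G :=
  Set.Finite.toFinset (Set.finite_range
    (fun q : _root_.Quotient (DoubleCoset.setoid (H : Set G) (H : Set G)) => q.out))

lemma mem_dosetReps {H : Subgroup G} {x : G} :
    x ∈ dosetReps H ↔
      ∃ q : _root_.Quotient (DoubleCoset.setoid (H : Set G) (H : Set G)), q.out = x := by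
  simp [dosetReps, Set.Finite.mem_toFinset, Set.mem_range]

lemma dosetReps_inj (H : Subgroup G) : ∀ x ∈ dosetReps H, ∀ y ∈ dosetReps H,
    doubleCoset x (H : Set G) (H : Set G) = doubleCoset y (H : Set G) (H : Set G) → x = y := by
  intro x hx y hy hxy
  obtain ⟨q, rfl⟩ := mem_dosetReps.1 hx
  obtain ⟨q', rfl⟩ := mem_dosetReps.1 hy
  have := DoubleCoset.mk_eq_of_doubleCoset_eq (H := H) (K := H) hxy
  erw [DoubleCoset.out_eq', DoubleCoset.out_eq'] at this
  rw [this]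

lemma dosetReps_exists (H : Subgroup G) (z : G) :
    ∃ x ∈ dosetReps H, z ∈ doubleCoset x (H : Set G) (H : Set G) := by
  refine ⟨(DoubleCoset.mk H H z).out, ?_, ?_⟩
  · exact mem_dosetReps.2 ⟨_, rfl⟩
  · obtain ⟨h, k, hh, hk, he⟩ := DoubleCoset.mk_out_eq_mul H H z
    have : (DoubleCoset.mk H H z).out ∈ doubleCoset z (H : Set G) (H : Set G) :=
      DoubleCoset.mem_doubleCoset.2 ⟨h, hh, k, hk, he⟩
    rw [DoubleCoset.doubleCoset_eq_of_mem this]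
    exact DoubleCoset.mem_doubleCoset_self H H z

lemma eDoset_mul (H : Subgroup G) (g₁ g₂ : G) :
    eDoset H g₁ * eDoset H g₂ =
      ∑ x ∈ dosetReps H, ((Scount H g₁ g₂ x / Nat.card H : ℕ) : ℤ) • eDoset H x := by
  classical
  have hN : ((Nat.card H : ℚ)) ≠ 0 := by
    exact Nat.cast_ne_zero.mpr Nat.card_pos.ne'
  apply MonoidAlgebra.coeff_injective; apply Finsupp.ext
  intro z
  obtain ⟨x₀, hx₀T, hx₀z⟩ := dosetReps_exists H z
  have hL : (eDoset H g₁ * eDoset H g₂).coeff z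
      = (Nat.card H : ℚ)⁻¹ * ((Nat.card H : ℚ)⁻¹ * (Scount H g₁ g₂ z : ℚ)) := by
    rw [eDoset, eDoset, smul_mul_assoc, mul_smul_comm, MonoidAlgebra.coeff_smul_apply, MonoidAlgebra.coeff_smul_apply,
      stmt15_mul_indicator_apply]
    rfl
  rw [hL]
  have hR : ∀ x : G, ((((Scount H g₁ g₂ x / Nat.card H : ℕ) : ℤ) • eDoset H x).coeff z : ℚ)
      = (if z ∈ doubleCoset x (H : Set G) (H : Set G) then
          ((Scount H g₁ g₂ x / Nat.card H : ℕ) : ℚ) * (Nat.card H : ℚ)⁻¹ else 0) := by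
    intro x
    rw [MonoidAlgebra.coeff_smul_apply, eDoset, MonoidAlgebra.coeff_smul_apply, stmt15_indicator_apply]
    rw [smul_eq_mul, zsmul_eq_mul]
    split
    · simp only [Int.cast_natCast, mul_one]
    · simp
  have hsum : ((∑ x ∈ dosetReps H, ((Scount H g₁ g₂ x / Nat.card H : ℕ) : ℤ) • eDoset H x).coeff z : ℚ)
      = ∑ x ∈ dosetReps H, (if z ∈ doubleCoset x (H : Set G) (H : Set G) then
          ((Scount H g₁ g₂ x / Nat.card H : ℕ) : ℚ) * (Nat.card H : ℚ)⁻¹ else 0) := by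
    rw [MonoidAlgebra.coeff_sum, Finsupp.finset_sum_apply]
    exact Finset.sum_congr rfl fun x _ => hR x
  rw [hsum, Finset.sum_eq_single_of_mem x₀ hx₀T]
  · rw [if_pos hx₀z]
    obtain ⟨a, ha, b, hb, rfl⟩ := DoubleCoset.mem_doubleCoset.1 hx₀z
    rw [stmt15_Scount_invariant H g₁ g₂ ha hb,
      Nat.cast_div (stmt15_Scount_dvd H g₁ g₂ x₀) hN]
    field_simp
  · intro b hb hne
    rw [if_neg]
    intro hzb
    exact hne (dosetReps_inj H b hb x₀ hx₀T
      (by rw [← DoubleCoset.doubleCoset_eq_of_mem hzb, DoubleCoset.doubleCoset_eq_of_mem hx₀z]))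

lemma eDoset_mul_mem_span (H : Subgroup G) (g₁ g₂ : G) :
    eDoset H g₁ * eDoset H g₂ ∈ Submodule.span ℤ (Set.range (eDoset H)) := by
  rw [eDoset_mul]
  exact Submodule.sum_mem _ fun x _ =>
    Submodule.smul_mem _ _ (Submodule.subset_span ⟨x, rfl⟩)

end StmtFifteenMain

/-- The product of two double coset sums `e_K·e_L` is a ℤ-linear
combination of double coset sums; hence the ℤ-span of the `e_K` is a subring of `ℚG`,
finitely generated as a ℤ-module, and every `e_K` is integral over ℤ. -/
theorem stmt15 {G : Type} [Group G] [Finite G] (H : Subgroup G) :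
    (∀ g₁ g₂ : G, ∃ (T : Finset G) (c : G → ℤ),
      (∀ x ∈ T, ∀ y ∈ T,
        DoubleCoset.doubleCoset x (H : Set G) (H : Set G) = DoubleCoset.doubleCoset y (H : Set G) (H : Set G)
          → x = y) ∧
      eDoset H g₁ * eDoset H g₂ = ∑ x ∈ T, c x • eDoset H x) ∧
    (∀ x ∈ Submodule.span ℤ (Set.range (eDoset H)),
      ∀ y ∈ Submodule.span ℤ (Set.range (eDoset H)),
        x * y ∈ Submodule.span ℤ (Set.range (eDoset H))) ∧
    (Submodule.span ℤ (Set.range (eDoset H))).FG ∧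
    (∀ g : G, IsIntegral ℤ (eDoset H g)) := by
  classical
  set s : Set (MonoidAlgebra ℚ G) := Set.range (eDoset H) with hs
  refine ⟨?_, ?_, ?_, ?_⟩
  · intro g₁ g₂
    exact ⟨dosetReps H, fun x => ((Scount H g₁ g₂ x / Nat.card H : ℕ) : ℤ),
      dosetReps_inj H, eDoset_mul H g₁ g₂⟩
  · intro x hx y hy
    have h2 : Submodule.span ℤ (s * s) ≤ Submodule.span ℤ s := by
      rw [Submodule.span_le]
      rintro w hw
      rw [Set.mem_mul] at hw
      obtain ⟨a, ha, b, hb, rfl⟩ := hw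
      obtain ⟨g₁, rfl⟩ := ha
      obtain ⟨g₂, rfl⟩ := hb
      exact eDoset_mul_mem_span H g₁ g₂
    have := Submodule.mul_mem_mul hx hy
    rw [Submodule.span_mul_span] at this
    exact h2 this
  · exact Submodule.fg_span (Set.finite_range _)
  · intro g
    set M := Submodule.span ℤ (insert (1 : MonoidAlgebra ℚ G) s) with hM
    have h1M : (1 : MonoidAlgebra ℚ G) ∈ M := Submodule.subset_span (Set.mem_insert _ _)
    have hsM : Submodule.span ℤ s ≤ M := Submodule.span_mono (Set.subset_insert _ _)
    have hmulM : ∀ x y : MonoidAlgebra ℚ G, x ∈ M → y ∈ M → x * y ∈ M := by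
      intro x y hx hy
      have h0 := Submodule.mul_mem_mul hx hy
      rw [Submodule.span_mul_span] at h0
      refine Submodule.span_le.mpr ?_ h0
      rintro w hw
      rw [Set.mem_mul] at hw
      obtain ⟨a, ha, b, hb, rfl⟩ := hw
      rcases ha with rfl | ⟨g₁, rfl⟩
      · rw [one_mul]
        exact Submodule.subset_span hb
      · rcases hb with rfl | ⟨g₂, rfl⟩
        · rw [mul_one]
          exact Submodule.subset_span (Set.mem_insert_iff.2 (Or.inr ⟨g₁, rfl⟩))
        · exact hsM (eDoset_mul_mem_span H g₁ g₂)
    have hFG : (Subalgebra.toSubmodule (M.toSubalgebra h1M hmulM)).FG :=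
      Submodule.fg_span ((Set.finite_range _).insert 1)
    exact IsIntegral.of_mem_of_fg (M.toSubalgebra h1M hmulM) hFG _
      (hsM (Submodule.subset_span ⟨g, rfl⟩))
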